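/- arXiv:1212.3953 — 7 statements merged into one kernel-verified Lean document; each statement's English description precedes it below -/
import Mathlib

section
/- Let A be a p×p real matrix with at least one nonzero element in each row, and let L be the diagonal matrix with Lᵢᵢ = aᵢᵢ / Σⱼ aᵢⱼ². Then for every nonsingular diagonal matrix L', ‖LA − I_p‖² ≤ ‖L'A − I_p‖², and the minimum value equals p − Σᵢ (aᵢᵢ² / Σⱼ aᵢⱼ²). -/
open Matrix Finset

def permMat (p : ℕ) (σ : Equiv.Perm (Fin p)) : Matrix (Fin p) (Fin p) ℝ :=
  Matrix.of fun i j => if σ j = i then 1 else 0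

def PJDset (p : ℕ) : Set (Matrix (Fin p) (Fin p) ℝ) :=
  {C | ∃ (σ : Equiv.Perm (Fin p)) (J D : Fin p → ℝ),
    (∀ i, J i = 1 ∨ J i = -1) ∧ (∀ i, 0 < D i) ∧
    C = permMat p σ * Matrix.diagonal J * Matrix.diagonal D}

def frobSq {p : ℕ} (M : Matrix (Fin p) (Fin p) ℝ) : ℝ := ∑ i, ∑ j, (M i j) ^ 2

noncomputable def Dsq (p : ℕ) (A : Matrix (Fin p) (Fin p) ℝ) : ℝ :=
  (1 / ((p : ℝ) - 1)) * sInf ((fun C => frobSq (C * A - 1)) '' PJDset p)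

lemma frobSq_diag {p : ℕ} (A : Matrix (Fin p) (Fin p) ℝ) (L : Fin p → ℝ) :
    frobSq (Matrix.diagonal L * A - 1)
      = ∑ i, ((L i) ^ 2 * (∑ j, (A i j) ^ 2) - 2 * L i * A i i + 1) := by
  unfold frobSq
  refine Finset.sum_congr rfl fun i _ => ?_
  have : ∀ j, ((Matrix.diagonal L * A - 1) i j) ^ 2
      = (L i * A i j) ^ 2 - 2 * L i * A i j * (if i = j then (1:ℝ) else 0)
        + (if i = j then (1:ℝ) else 0) := by
    intro j
    simp only [Matrix.sub_apply, Matrix.diagonal_mul, Matrix.one_apply]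
    by_cases hij : i = j <;> simp [hij] <;> ring
  simp only [this, Finset.sum_add_distrib, Finset.sum_sub_distrib]
  rw [Finset.sum_ite_eq (Finset.univ) i (fun _ => (1:ℝ))]
  have h2 : ∑ j, 2 * L i * A i j * (if i = j then (1:ℝ) else 0)
      = 2 * L i * A i i := by
    rw [Finset.sum_eq_single i]
    · simp
    · intro b _ hb; simp [Ne.symm hb]
    · simp
  rw [h2]
  simp [Finset.mul_sum, mul_pow]

theorem stmt4 (p : ℕ) (hp : 1 ≤ p) (A : Matrix (Fin p) (Fin p) ℝ)
    (h : ∀ i, 0 < ∑ j, (A i j) ^ 2) :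
    (∀ L' : Fin p → ℝ, (∀ i, L' i ≠ 0) →
      frobSq (Matrix.diagonal (fun i => A i i / ∑ j, (A i j) ^ 2) * A - 1)
        ≤ frobSq (Matrix.diagonal L' * A - 1)) ∧
    frobSq (Matrix.diagonal (fun i => A i i / ∑ j, (A i j) ^ 2) * A - 1)
      = (p : ℝ) - ∑ i, (A i i) ^ 2 / ∑ j, (A i j) ^ 2 := by
  set S : Fin p → ℝ := fun i => ∑ j, (A i j) ^ 2 with hS
  have key : ∀ i, ((A i i / S i) ^ 2 * S i - 2 * (A i i / S i) * A i i + 1)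
      = 1 - (A i i) ^ 2 / S i := by
    intro i
    have hs := (h i)
    field_simp
    ring
  constructor
  · intro L' _
    rw [frobSq_diag, frobSq_diag]
    refine Finset.sum_le_sum fun i _ => ?_
    have hs := h i
    rw [key i]
    have hne : S i ≠ 0 := ne_of_gt hs
    have : (A i i) ^ 2 / S i = (A i i / S i) * A i i := by
      field_simp
    have hsq : 0 ≤ S i * (L' i - A i i / S i) ^ 2 := by positivity
    have hexp : S i * (L' i - A i i / S i) ^ 2
        = (L' i) ^ 2 * S i - 2 * L' i * A i i + (A i i) ^ 2 / S i := by
      field_simp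
      ring
    nlinarith [hsq, hexp]
  · rw [frobSq_diag]
    refine (Finset.sum_congr rfl fun i _ => key i).trans ?_
    rw [Finset.sum_sub_distrib]
    simp; rfl
end

section
/- Let A be a p×p real matrix with at least one nonzero element in each row, and define the row-normalized matrix Ã with Ãᵢⱼ = aᵢⱼ² / Σₖ aᵢₖ². Then D²(A) := (1/(p−1)) inf_{C∈C} ‖CA − I_p‖² = (1/(p−1)) (p − max over permutation matrices P of tr(P Ã)). -/
open Matrix Finset

noncomputable def Atilde {p : ℕ} (A : Matrix (Fin p) (Fin p) ℝ) : Matrix (Fin p) (Fin p) ℝ :=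
  Matrix.of fun i j => (A i j) ^ 2 / ∑ k, (A i k) ^ 2

lemma permMat_mul_apply {p : ℕ} (σ : Equiv.Perm (Fin p)) (B : Matrix (Fin p) (Fin p) ℝ)
    (i j : Fin p) : (permMat p σ * B) i j = B (σ.symm i) j := by
  simp only [Matrix.mul_apply, permMat, Matrix.of_apply]
  rw [Finset.sum_eq_single (σ.symm i)]
  · simp
  · intro k _ hk
    rw [if_neg, zero_mul]
    intro hh; exact hk (by rw [← hh, Equiv.symm_apply_apply])
  · simp

lemma trace_permMat_mul {p : ℕ} (σ : Equiv.Perm (Fin p)) (B : Matrix (Fin p) (Fin p) ℝ) :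
    Matrix.trace (permMat p σ * B) = ∑ k, B k (σ k) := by
  rw [Matrix.trace]
  simp only [Matrix.diag_apply, permMat_mul_apply]
  exact (Fintype.sum_equiv σ (fun k => B k (σ k)) (fun i => B (σ.symm i) i)
    (fun k => by simp)).symm

lemma frob_val {p : ℕ} (σ : Equiv.Perm (Fin p)) (g : Fin p → ℝ)
    (A : Matrix (Fin p) (Fin p) ℝ) :
    frobSq (permMat p σ * Matrix.diagonal g * A - 1) =
      ∑ k, ((g k) ^ 2 * (∑ j, (A k j) ^ 2) - 2 * g k * A k (σ k) + 1) := by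
  have hentry : ∀ i j, (permMat p σ * Matrix.diagonal g * A) i j
      = g (σ.symm i) * A (σ.symm i) j := by
    intro i j
    rw [Matrix.mul_assoc, permMat_mul_apply]
    simp [Matrix.mul_apply, Matrix.diagonal_apply, Finset.sum_ite_eq]
  unfold frobSq
  calc ∑ i, ∑ j, ((permMat p σ * Matrix.diagonal g * A - 1) i j) ^ 2
      = ∑ i, ∑ j, (g (σ.symm i) * A (σ.symm i) j - (if i = j then 1 else 0)) ^ 2 := by
        refine Finset.sum_congr rfl fun i _ => Finset.sum_congr rfl fun j _ => ?_
        rw [Matrix.sub_apply, hentry, Matrix.one_apply]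
    _ = ∑ k, ∑ j, (g k * A k j - (if σ k = j then 1 else 0)) ^ 2 :=
        Fintype.sum_equiv σ.symm _ _ (fun i => by simp)
    _ = ∑ k, ((g k) ^ 2 * (∑ j, (A k j) ^ 2) - 2 * g k * A k (σ k) + 1) := by
        refine Finset.sum_congr rfl fun k _ => ?_
        have expand : ∀ j ∈ Finset.univ, (g k * A k j - (if σ k = j then 1 else 0)) ^ 2
            = (g k) ^ 2 * (A k j) ^ 2 - (if σ k = j then 2 * g k * A k j else 0)
              + (if σ k = j then 1 else 0) := by
          intro j _; split <;> ring
        rw [Finset.sum_congr rfl expand, Finset.sum_add_distrib, Finset.sum_sub_distrib,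
          ← Finset.mul_sum, Finset.sum_ite_eq, Finset.sum_ite_eq]
        simp

lemma key_ineq (S a g : ℝ) (hS : 0 < S) : 1 - a ^ 2 / S ≤ g ^ 2 * S - 2 * g * a + 1 := by
  have h1 : a ^ 2 / S * S = a ^ 2 := div_mul_cancel₀ _ hS.ne'
  nlinarith [sq_nonneg (g * S - a), h1, hS]

lemma permDiag_mem {p : ℕ} (σ : Equiv.Perm (Fin p)) (g : Fin p → ℝ) (hg : ∀ k, g k ≠ 0) :
    permMat p σ * Matrix.diagonal g ∈ PJDset p := by
  have hfun : (fun k => (if 0 < g k then (1:ℝ) else -1) * |g k|) = g := by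
    funext k
    by_cases hk : 0 < g k
    · simp [hk, abs_of_pos hk]
    · have hneg : g k < 0 := lt_of_le_of_ne (not_lt.mp hk) (hg k)
      simp [hk, abs_of_neg hneg]
  refine ⟨σ, fun k => if 0 < g k then 1 else -1, fun k => |g k|,
    fun i => by by_cases hk : 0 < g i <;> simp [hk],
    fun i => abs_pos.mpr (hg i), ?_⟩
  rw [Matrix.mul_assoc, Matrix.diagonal_mul_diagonal, hfun]

set_option maxHeartbeats 1000000 in
theorem stmt5 (p : ℕ) (hp : 2 ≤ p) (A : Matrix (Fin p) (Fin p) ℝ)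
    (h : ∀ i, 0 < ∑ k, (A i k) ^ 2) :
    Dsq p A = (1 / ((p : ℝ) - 1)) *
      ((p : ℝ) - Finset.univ.sup' Finset.univ_nonempty
        (fun σ : Equiv.Perm (Fin p) => Matrix.trace (permMat p σ * Atilde A))) := by
  classical
  haveI : NeZero p := ⟨by omega⟩
  have htr : ∀ σ : Equiv.Perm (Fin p),
      Matrix.trace (permMat p σ * Atilde A) = ∑ k, (A k (σ k)) ^ 2 / ∑ j, (A k j) ^ 2 := by
    intro σ
    rw [trace_permMat_mul]
    rfl
  set M : ℝ := Finset.univ.sup' Finset.univ_nonempty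
      (fun σ : Equiv.Perm (Fin p) => Matrix.trace (permMat p σ * Atilde A)) with hMdef
  set T : Set ℝ := (fun C => frobSq (C * A - 1)) '' PJDset p with hTdef
  have lb : ∀ x ∈ T, (p : ℝ) - M ≤ x := by
    rintro x ⟨C, ⟨σ, J, D, hJ, hD, rfl⟩, rfl⟩
    have hC : permMat p σ * Matrix.diagonal J * Matrix.diagonal D
        = permMat p σ * Matrix.diagonal (fun k => J k * D k) := by
      rw [Matrix.mul_assoc, Matrix.diagonal_mul_diagonal]
    simp only [hC, frob_val]
    have step1 : ∑ k, (1 - (A k (σ k)) ^ 2 / ∑ j, (A k j) ^ 2)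
        ≤ ∑ k, ((J k * D k) ^ 2 * (∑ j, (A k j) ^ 2) - 2 * (J k * D k) * A k (σ k) + 1) :=
      Finset.sum_le_sum fun k _ => key_ineq _ _ _ (h k)
    have step2 : ∑ k : Fin p, (1 - (A k (σ k)) ^ 2 / ∑ j, (A k j) ^ 2)
        = (p : ℝ) - Matrix.trace (permMat p σ * Atilde A) := by
      rw [htr σ, Finset.sum_sub_distrib, Finset.sum_const, Finset.card_univ, Fintype.card_fin,
        nsmul_eq_mul, mul_one]
    have step3 : Matrix.trace (permMat p σ * Atilde A) ≤ M := by
      rw [hMdef]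
      exact Finset.le_sup' (fun σ : Equiv.Perm (Fin p) =>
        Matrix.trace (permMat p σ * Atilde A)) (Finset.mem_univ σ)
    linarith
  have hne : T.Nonempty :=
    ⟨frobSq (permMat p 1 * Matrix.diagonal (fun _ => (1:ℝ)) * A - 1),
      permMat p 1 * Matrix.diagonal (fun _ => (1:ℝ)),
      permDiag_mem 1 _ (fun _ => one_ne_zero), rfl⟩
  have hbdd : BddBelow T := ⟨(p : ℝ) - M, lb⟩
  have ub : sInf T ≤ (p : ℝ) - M := by
    rw [Real.sInf_le_iff hbdd hne]
    intro ε hε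
    obtain ⟨σ₀, -, hσ₀⟩ := Finset.exists_mem_eq_sup' (Finset.univ_nonempty)
      (fun σ : Equiv.Perm (Fin p) => Matrix.trace (permMat p σ * Atilde A))
    have hM0 : M = Matrix.trace (permMat p σ₀ * Atilde A) := hMdef.trans hσ₀
    set T0 : ℝ := ∑ k : Fin p, ∑ j, (A k j) ^ 2 with hT0
    have hT0pos : 0 < T0 := Finset.sum_pos (fun k _ => h k) Finset.univ_nonempty
    set δ : ℝ := Real.sqrt (ε / (2 * T0)) with hδ
    have hδpos : 0 < δ := Real.sqrt_pos.mpr (by positivity)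
    have hδsq : δ ^ 2 = ε / (2 * T0) := Real.sq_sqrt (by positivity)
    set g : Fin p → ℝ := fun k => if A k (σ₀ k) = 0 then δ
      else A k (σ₀ k) / ∑ j, (A k j) ^ 2 with hg
    have hgne : ∀ k, g k ≠ 0 := by
      intro k
      by_cases hk : A k (σ₀ k) = 0
      · simp [hg, hk, hδpos.ne']
      · simp only [hg, hk, if_false]
        exact div_ne_zero hk (h k).ne'
    have hterm : ∀ k, (g k) ^ 2 * (∑ j, (A k j) ^ 2) - 2 * g k * A k (σ₀ k) + 1
        ≤ (1 - (A k (σ₀ k)) ^ 2 / ∑ j, (A k j) ^ 2) + δ ^ 2 * (∑ j, (A k j) ^ 2) := by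
      intro k
      by_cases hk : A k (σ₀ k) = 0
      · simp only [hg, hk, if_true]
        have h0 : (0:ℝ) ^ 2 / ∑ j, (A k j) ^ 2 = 0 := by simp
        rw [h0]
        linarith
      · simp only [hg, hk, if_false]
        have hSk := h k
        have hexact : (A k (σ₀ k) / ∑ j, (A k j) ^ 2) ^ 2 * (∑ j, (A k j) ^ 2)
            - 2 * (A k (σ₀ k) / ∑ j, (A k j) ^ 2) * A k (σ₀ k) + 1
            = 1 - (A k (σ₀ k)) ^ 2 / ∑ j, (A k j) ^ 2 := by
          field_simp
          ring
        rw [hexact]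
        nlinarith [sq_nonneg δ, hSk]
    refine ⟨frobSq (permMat p σ₀ * Matrix.diagonal g * A - 1),
      ⟨permMat p σ₀ * Matrix.diagonal g, permDiag_mem σ₀ g hgne, rfl⟩, ?_⟩
    rw [frob_val]
    have sum_le : ∑ k, ((g k) ^ 2 * (∑ j, (A k j) ^ 2) - 2 * g k * A k (σ₀ k) + 1)
        ≤ ∑ k, ((1 - (A k (σ₀ k)) ^ 2 / ∑ j, (A k j) ^ 2) + δ ^ 2 * (∑ j, (A k j) ^ 2)) :=
      Finset.sum_le_sum fun k _ => hterm k
    have split : ∑ k, ((1 - (A k (σ₀ k)) ^ 2 / ∑ j, (A k j) ^ 2) + δ ^ 2 * (∑ j, (A k j) ^ 2))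
        = ((p : ℝ) - Matrix.trace (permMat p σ₀ * Atilde A)) + δ ^ 2 * T0 := by
      rw [Finset.sum_add_distrib, ← Finset.mul_sum, htr σ₀, Finset.sum_sub_distrib,
        Finset.sum_const, Finset.card_univ, Fintype.card_fin, nsmul_eq_mul, mul_one, hT0]
    have hhalf : δ ^ 2 * T0 = ε / 2 := by
      rw [hδsq]; field_simp
    linarith
  have main : sInf T = (p : ℝ) - M := le_antisymm ub (le_csInf hne lb)
  unfold Dsq
  rw [← hTdef, main]
end

section
/- Let à be a p×p row-stochastic matrix (nonnegative entries, row sums equal 1). If tr(P Ã) is equal for all permutation matrices P (equivalently, if max_P tr(PÃ) = 1), then all rows of à are identical. -/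
open Matrix Finset

theorem stmt8 (p : ℕ) (hp : 2 ≤ p) (At : Matrix (Fin p) (Fin p) ℝ)
    (hpos : ∀ i j, 0 ≤ At i j) (hrow : ∀ i, ∑ j, At i j = 1)
    (heq : ∀ σ τ : Equiv.Perm (Fin p),
      Matrix.trace (permMat p σ * At) = Matrix.trace (permMat p τ * At)) :
    ∀ i i' j, At i j = At i' j := by
  have tr : ∀ σ : Equiv.Perm (Fin p),
      Matrix.trace (permMat p σ * At) = ∑ i, At (σ⁻¹ i) i := by
    intro σ
    simp only [Matrix.trace, Matrix.diag, Matrix.mul_apply, permMat, Matrix.of_apply]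
    refine Finset.sum_congr rfl fun i _ => ?_
    rw [Finset.sum_eq_single (σ⁻¹ i)]
    · simp
    · intro k _ hk
      rw [if_neg, zero_mul]
      intro h
      exact hk (by rw [← h]; simp)
    · simp
  have hconst : ∀ σ : Equiv.Perm (Fin p), ∑ i, At (σ i) i = ∑ i, At i i := by
    intro σ
    have := heq σ⁻¹ 1
    rw [tr, tr] at this
    simpa using this
  have cross : ∀ (a b j j' : Fin p), j ≠ j' → a ≠ b →
      At a j + At b j' = At b j + At a j' := by
    intro a b j j' hjj hab
    set c := Equiv.swap j a j' with hc
    have hca : a ≠ c := by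
      intro h
      have := (Equiv.swap j a).injective ((Equiv.swap_apply_left j a).trans h)
      exact hjj this
    set σ := (Equiv.swap c b) * (Equiv.swap j a) with hσ
    have hσj : σ j = a := by
      rw [hσ, Equiv.Perm.mul_apply, Equiv.swap_apply_left,
        Equiv.swap_apply_of_ne_of_ne hca hab]
    have hσj' : σ j' = b := by
      rw [hσ, Equiv.Perm.mul_apply, ← hc, Equiv.swap_apply_left]
    have hsum : ∑ i, At (σ (Equiv.swap j j' i)) i = ∑ i, At (σ i) i := by
      have h1 := hconst (σ * Equiv.swap j j')
      have h2 := hconst σ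
      simp only [Equiv.Perm.mul_apply] at h1
      rw [h1, h2]
    have hzero : ∑ i, (At (σ (Equiv.swap j j' i)) i - At (σ i) i) = 0 := by
      rw [Finset.sum_sub_distrib, hsum, sub_self]
    have hpair : ∑ i ∈ ({j, j'} : Finset (Fin p)),
        (At (σ (Equiv.swap j j' i)) i - At (σ i) i) = 0 := by
      rw [← hzero]
      apply Finset.sum_subset (Finset.subset_univ _)
      intro i _ hi
      simp only [Finset.mem_insert, Finset.mem_singleton] at hi
      push_neg at hi
      rw [Equiv.swap_apply_of_ne_of_ne hi.1 hi.2, sub_self]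
    rw [Finset.sum_pair hjj] at hpair
    rw [Equiv.swap_apply_left, Equiv.swap_apply_right, hσj, hσj'] at hpair
    linarith
  intro i i' j
  by_cases h : i = i'
  · rw [h]
  · have key : ∀ j', At i j - At i' j = At i j' - At i' j' := by
      intro j'
      by_cases hj : j = j'
      · rw [hj]
      · have := cross i i' j j' hj h; linarith
    have hsum0 : ∑ j', (At i j' - At i' j') = 0 := by
      rw [Finset.sum_sub_distrib, hrow, hrow, sub_self]
    have hsum1 : ∑ _j' : Fin p, (At i j - At i' j) = 0 := by
      rw [← hsum0]
      exact Finset.sum_congr rfl fun j' _ => key j'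
    rw [Finset.sum_const, Finset.card_univ, Fintype.card_fin, nsmul_eq_mul] at hsum1
    have hp0 : (p : ℝ) ≠ 0 := Nat.cast_ne_zero.mpr (by omega)
    have := mul_eq_zero.mp hsum1
    rcases this with h1 | h1
    · exact absurd h1 hp0
    · linarith
end

section
/- For every p×p real matrix A having at least one nonzero element in each row, the minimum distance index satisfies 0 ≤ D²(A) ≤ 1, where D²(A) = (1/(p−1)) inf_{C∈C} ‖CA − I_p‖². -/
open Matrix Finset

-- Aux 1: sum over all permutations of g (σ i)
lemma sum_perm_apply (n : ℕ) (i : Fin (n+1)) (g : Fin (n+1) → ℝ) :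
    ∑ σ : Equiv.Perm (Fin (n+1)), g (σ i) = (Nat.factorial n : ℝ) * ∑ j, g j := by
  have h0 : ∑ σ : Equiv.Perm (Fin (n+1)), g (σ 0)
      = ∑ σ : Equiv.Perm (Fin (n+1)), g (σ i) := by
    refine Fintype.sum_equiv (Equiv.mulRight (Equiv.swap 0 i)) _ _ fun σ => ?_
    simp [Equiv.Perm.mul_apply]
  rw [← h0]
  have h1 : ∑ σ : Equiv.Perm (Fin (n+1)), g (σ 0)
      = ∑ x : Fin (n+1) × Equiv.Perm (Fin n), g x.1 := by
    refine (Fintype.sum_equiv Equiv.Perm.decomposeFin.symm _ _ fun x => ?_).symm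
    rw [Equiv.Perm.decomposeFin_symm_apply_zero]
  rw [h1, Fintype.sum_prod_type]
  simp [Finset.sum_const, Fintype.card_perm, Fintype.card_fin, Finset.sum_mul]
  rw [Finset.mul_sum]

lemma exists_good_perm (n : ℕ) (f : Fin (n+1) → Fin (n+1) → ℝ)
    (hf : ∀ i, ∑ j, f i j = 1) :
    ∃ σ : Equiv.Perm (Fin (n+1)), 1 ≤ ∑ i, f i (σ i) := by
  have hsum : ∑ σ : Equiv.Perm (Fin (n+1)), ∑ i, f i (σ i)
      = (Fintype.card (Equiv.Perm (Fin (n+1))) : ℝ) := by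
    rw [Finset.sum_comm]
    simp only [sum_perm_apply, hf]
    simp [Fintype.card_perm, Fintype.card_fin, Nat.factorial_succ]
  obtain ⟨σ, -, hσ⟩ := Finset.exists_le_of_sum_le (Finset.univ_nonempty)
    (f := fun _ : Equiv.Perm (Fin (n+1)) => (1 : ℝ))
    (g := fun σ => ∑ i, f i (σ i)) (by
      rw [hsum, Finset.sum_const, Finset.card_univ, nsmul_eq_mul, mul_one])
  exact ⟨σ, hσ⟩

lemma CA_entry (p : ℕ) (σ : Equiv.Perm (Fin p)) (J D : Fin p → ℝ)
    (A : Matrix (Fin p) (Fin p) ℝ) (i j : Fin p) :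
    ((permMat p σ * Matrix.diagonal J * Matrix.diagonal D) * A) i j
      = J (σ.symm i) * D (σ.symm i) * A (σ.symm i) j := by
  rw [Matrix.mul_apply]
  have hk : ∀ k, (permMat p σ * Matrix.diagonal J * Matrix.diagonal D) i k * A k j
      = if k = σ.symm i then J k * D k * A k j else 0 := by
    intro k
    rw [Matrix.mul_diagonal, Matrix.mul_diagonal]
    by_cases h : k = σ.symm i
    · subst h; simp [permMat]
    · have : ¬ σ k = i := fun hc => h (by simp [← hc])
      simp [permMat, this, h]
  simp only [hk]
  rw [Finset.sum_ite_eq' Finset.univ (σ.symm i) (fun k => J k * D k * A k j)]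
  simp

lemma frob_formula (p : ℕ) (σ : Equiv.Perm (Fin p)) (J D : Fin p → ℝ)
    (A : Matrix (Fin p) (Fin p) ℝ) :
    frobSq ((permMat p σ * Matrix.diagonal J * Matrix.diagonal D) * A - 1)
      = ∑ r, ((J r * D r)^2 * (∑ j, (A r j)^2) - 2 * (J r * D r) * A r (σ r) + 1) := by
  unfold frobSq
  have hent : ∀ i j, ((permMat p σ * Matrix.diagonal J * Matrix.diagonal D) * A - 1) i j
      = J (σ.symm i) * D (σ.symm i) * A (σ.symm i) j - (if i = j then 1 else 0) := by
    intro i j; rw [Matrix.sub_apply, CA_entry, Matrix.one_apply]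
  simp only [hent]
  rw [← Equiv.sum_comp σ (fun i => ∑ j,
      (J (σ.symm i) * D (σ.symm i) * A (σ.symm i) j - if i = j then 1 else 0)^2)]
  simp only [Equiv.symm_apply_apply]
  refine Finset.sum_congr rfl fun r _ => ?_
  have expand : ∀ j : Fin p, (J r * D r * A r j - (if σ r = j then (1:ℝ) else 0))^2
      = (J r * D r)^2 * (A r j)^2 - 2*(J r * D r)*(if σ r = j then A r j else 0)
        + (if σ r = j then 1 else 0) := by
    intro j; by_cases h : σ r = j <;> simp [h] <;> ring
  simp only [expand]
  rw [Finset.sum_add_distrib, Finset.sum_sub_distrib, ← Finset.mul_sum, ← Finset.mul_sum,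
    Finset.sum_ite_eq Finset.univ (σ r), Finset.sum_ite_eq Finset.univ (σ r)]
  simp

theorem stmt9 (p : ℕ) (hp : 2 ≤ p) (A : Matrix (Fin p) (Fin p) ℝ)
    (h : ∀ i, ∃ j, A i j ≠ 0) :
    0 ≤ Dsq p A ∧ Dsq p A ≤ 1 := by
  have hnonneg : ∀ x ∈ (fun C => frobSq (C * A - 1)) '' PJDset p, (0:ℝ) ≤ x := by
    rintro x ⟨C, -, rfl⟩
    exact Finset.sum_nonneg fun i _ => Finset.sum_nonneg fun j _ => sq_nonneg _
  have hbdd : BddBelow ((fun C => frobSq (C * A - 1)) '' PJDset p) := ⟨0, hnonneg⟩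
  have hinf0 : 0 ≤ sInf ((fun C => frobSq (C * A - 1)) '' PJDset p) :=
    Real.sInf_nonneg hnonneg
  have hp1 : (0:ℝ) < (p:ℝ) - 1 := by
    have : (2:ℝ) ≤ (p:ℝ) := by exact_mod_cast hp
    linarith
  constructor
  · exact mul_nonneg (by positivity) hinf0
  -- upper bound
  obtain ⟨n, rfl⟩ : ∃ n, p = n + 1 := ⟨p - 1, by omega⟩
  set Srow : Fin (n+1) → ℝ := fun i => ∑ j, (A i j)^2 with hSrow
  have hS : ∀ i, 0 < Srow i := by
    intro i
    obtain ⟨j, hj⟩ := h i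
    exact Finset.sum_pos' (fun k _ => sq_nonneg _) ⟨j, Finset.mem_univ j, by positivity⟩
  set At : Fin (n+1) → Fin (n+1) → ℝ := fun i j => (A i j)^2 / Srow i with hAt
  have hrow : ∀ i, ∑ j, At i j = 1 := by
    intro i
    rw [hAt]
    rw [← Finset.sum_div, div_self (hS i).ne']
  obtain ⟨σ, hσ⟩ := exists_good_perm n At hrow
  have key : ∀ ε : ℝ, 0 < ε →
      sInf ((fun C => frobSq (C * A - 1)) '' PJDset (n+1))
        ≤ ((n+1:ℕ):ℝ) - 1 + ε^2 * ∑ r, 1 / Srow r := by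
    intro ε hε
    set J : Fin (n+1) → ℝ := fun r => if A r (σ r) < 0 then -1 else 1 with hJdef
    set D : Fin (n+1) → ℝ := fun r => (|A r (σ r)| + ε) / Srow r with hDdef
    have hJ : ∀ r, J r = 1 ∨ J r = -1 := by
      intro r; by_cases hc : A r (σ r) < 0 <;> simp [hJdef, hc]
    have hD : ∀ r, 0 < D r := fun r => div_pos (by positivity) (hS r)
    have hmem : frobSq ((permMat (n+1) σ * Matrix.diagonal J * Matrix.diagonal D) * A - 1)
        ∈ (fun C => frobSq (C * A - 1)) '' PJDset (n+1) :=
      ⟨_, ⟨σ, J, D, hJ, hD, rfl⟩, rfl⟩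
    refine le_trans (csInf_le hbdd hmem) ?_
    rw [frob_formula]
    have hJa : ∀ r, J r * A r (σ r) = |A r (σ r)| := by
      intro r; by_cases hc : A r (σ r) < 0
      · simp [hJdef, hc, abs_of_neg hc]
      · simp [hJdef, hc, abs_of_nonneg (le_of_not_gt hc)]
    have hrowval : ∀ r, (J r * D r)^2 * (∑ j, (A r j)^2) - 2 * (J r * D r) * A r (σ r) + 1
        = ε^2 / Srow r - At r (σ r) + 1 := by
      intro r
      have hJ2 : (J r)^2 = 1 := by rcases hJ r with hc | hc <;> rw [hc] <;> norm_num
      have hSne : Srow r ≠ 0 := (hS r).ne'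
      have e1 : (J r * D r)^2 = (D r)^2 := by rw [mul_pow, hJ2, one_mul]
      have e2 : 2 * (J r * D r) * A r (σ r) = 2 * D r * |A r (σ r)| := by
        rw [mul_comm (J r) (D r), mul_assoc, mul_assoc, hJa r]; ring
      rw [e1, e2, hDdef, hAt]
      show ((|A r (σ r)| + ε) / Srow r)^2 * Srow r
          - 2 * ((|A r (σ r)| + ε) / Srow r) * |A r (σ r)| + 1
          = ε^2 / Srow r - (A r (σ r))^2 / Srow r + 1
      have hsq : |A r (σ r)|^2 = (A r (σ r))^2 := sq_abs _
      field_simp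
      linear_combination (-1 : ℝ) * hsq
    rw [Finset.sum_congr rfl fun r _ => hrowval r]
    rw [Finset.sum_add_distrib, Finset.sum_sub_distrib]
    have : ∑ r : Fin (n+1), ε^2 / Srow r = ε^2 * ∑ r, 1 / Srow r := by
      rw [Finset.mul_sum]
      exact Finset.sum_congr rfl fun r _ => by rw [mul_one_div]
    rw [this]
    have hcard : ∑ _r : Fin (n+1), (1:ℝ) = ((n+1:ℕ):ℝ) := by simp
    rw [hcard]
    linarith [hσ]
  -- conclude sInf ≤ p - 1
  set T : ℝ := ∑ r, 1 / Srow r with hT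
  have hT0 : 0 ≤ T := Finset.sum_nonneg fun r _ => by positivity
  have hfin : sInf ((fun C => frobSq (C * A - 1)) '' PJDset (n+1)) ≤ ((n+1:ℕ):ℝ) - 1 := by
    refine le_of_forall_pos_le_add fun ε hε => ?_
    have hδpos : 0 < ε / (T + 1) := by positivity
    have hkey := key (Real.sqrt (ε / (T + 1))) (Real.sqrt_pos.mpr hδpos)
    rw [Real.sq_sqrt hδpos.le] at hkey
    refine hkey.trans ?_
    have : ε / (T + 1) * T ≤ ε := by
      rw [div_mul_eq_mul_div, div_le_iff₀ (by linarith)]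
      nlinarith
    linarith
  rw [Dsq, div_mul_eq_mul_div, one_mul, div_le_one hp1]
  linarith
end

section
/- For a p×p real matrix A with at least one nonzero element in each row, D²(A) = 0 if and only if A = C for some C ∈ C, i.e., if and only if A has exactly one nonzero element in each row and each column (A ~ I_p). -/
open Matrix Finset

lemma pjd_entry (p : ℕ) (σ : Equiv.Perm (Fin p)) (J D : Fin p → ℝ) (i k : Fin p) :
    (permMat p σ * Matrix.diagonal J * Matrix.diagonal D) i k
      = if σ k = i then J k * D k else 0 := by
  rw [Matrix.mul_diagonal, Matrix.mul_diagonal]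
  simp only [permMat, Matrix.of_apply]
  split <;> ring

lemma mul_entry (p : ℕ) (σ : Equiv.Perm (Fin p)) (J D : Fin p → ℝ)
    (A : Matrix (Fin p) (Fin p) ℝ) (i l : Fin p) :
    ((permMat p σ * Matrix.diagonal J * Matrix.diagonal D) * A) i l
      = J (σ⁻¹ i) * D (σ⁻¹ i) * A (σ⁻¹ i) l := by
  rw [Matrix.mul_apply, Finset.sum_eq_single (σ⁻¹ i)]
  · rw [pjd_entry]; simp
  · intro k _ hk
    rw [pjd_entry]
    have : σ k ≠ i := fun hh => hk (by simp [← hh])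
    simp [this]
  · simp

-- per-row lower bound
lemma row_bound (p : ℕ) (A : Matrix (Fin p) (Fin p) ℝ) (k : Fin p)
    (hk : 0 < ∑ l, (A k l) ^ 2) (c : ℝ) (m : Fin p) :
    (∑ l, (A k l) ^ 2 - (A k m) ^ 2) / (∑ l, (A k l) ^ 2)
      ≤ ∑ l, (c * A k l - if m = l then 1 else 0) ^ 2 := by
  set a := A k m with ha
  set S := ∑ l ∈ Finset.univ.erase m, (A k l) ^ 2 with hS
  have hrow : ∑ l, (A k l) ^ 2 = a ^ 2 + S := by
    rw [hS, ← Finset.add_sum_erase _ _ (Finset.mem_univ m)]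
  have hsplit : ∑ l, (c * A k l - if m = l then 1 else 0) ^ 2
      = (c * a - 1) ^ 2 + c ^ 2 * S := by
    rw [← Finset.add_sum_erase _ _ (Finset.mem_univ m)]
    simp only [if_pos rfl]
    congr 1
    rw [Finset.mul_sum]
    refine Finset.sum_congr rfl fun l hl => ?_
    have : m ≠ l := (Finset.mem_erase.1 hl).1.symm
    rw [if_neg this]
    ring
  have hSnn : 0 ≤ S := Finset.sum_nonneg fun l _ => sq_nonneg _
  rw [hsplit, hrow]
  rw [div_le_iff₀ (by linarith [hrow ▸ hk])]
  nlinarith [sq_nonneg (c * (S + a ^ 2) - a)]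

theorem stmt10 (p : ℕ) (hp : 2 ≤ p) (A : Matrix (Fin p) (Fin p) ℝ)
    (h : ∀ i, ∃ j, A i j ≠ 0) :
    Dsq p A = 0 ↔ A ∈ PJDset p := by
  have hfac : (0:ℝ) < 1 / ((p : ℝ) - 1) := by
    have : (2:ℝ) ≤ p := by exact_mod_cast hp
    have : (0:ℝ) < (p:ℝ) - 1 := by linarith
    positivity
  set S := (fun C => frobSq (C * A - 1)) '' PJDset p with hSdef
  have hSne : S.Nonempty := by
    refine ⟨_, ⟨1, ⟨1, fun _ => 1, fun _ => 1, fun _ => Or.inl rfl,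
      fun _ => one_pos, ?_⟩, rfl⟩⟩
    ext i k
    rw [pjd_entry]
    simp only [permMat, Matrix.one_apply, Matrix.of_apply, one_mul]
    by_cases hik : i = k <;> simp [hik, eq_comm]
  have hS0 : ∀ x ∈ S, (0:ℝ) ≤ x := by
    rintro x ⟨C, _, rfl⟩
    exact Finset.sum_nonneg fun i _ => Finset.sum_nonneg fun j _ => sq_nonneg _
  have hrowpos : ∀ i, 0 < ∑ l, (A i l) ^ 2 := by
    intro i
    obtain ⟨j, hj⟩ := h i
    exact Finset.sum_pos' (fun l _ => sq_nonneg _)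
      ⟨j, Finset.mem_univ j, by positivity⟩
  -- the function g on permutations
  set g : Equiv.Perm (Fin p) → ℝ :=
    fun σ => ∑ i, (∑ l, (A i l) ^ 2 - (A i (σ i)) ^ 2) / (∑ l, (A i l) ^ 2)
    with hgdef
  -- each element of S with permutation σ is ≥ g σ
  have hbound : ∀ (σ : Equiv.Perm (Fin p)) (J D : Fin p → ℝ),
      g σ ≤ frobSq ((permMat p σ * Matrix.diagonal J * Matrix.diagonal D) * A - 1) := by
    intro σ J D
    have hfrob : frobSq ((permMat p σ * Matrix.diagonal J * Matrix.diagonal D) * A - 1)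
        = ∑ k, ∑ l, (J k * D k * A k l - if σ k = l then 1 else 0) ^ 2 := by
      unfold frobSq
      rw [← Equiv.sum_comp σ⁻¹ (fun k => ∑ l, (J k * D k * A k l - if σ k = l then 1 else 0) ^ 2)]
      refine Finset.sum_congr rfl fun i _ => ?_
      refine Finset.sum_congr rfl fun l _ => ?_
      rw [Matrix.sub_apply, mul_entry, Matrix.one_apply]
      simp [Equiv.apply_eq_iff_eq_symm_apply, eq_comm]
    rw [hfrob, hgdef]
    exact Finset.sum_le_sum fun k _ => row_bound p A k (hrowpos k) (J k * D k) (σ k)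
  constructor
  · -- forward
    intro h0
    by_contra hA
    have hg : ∀ σ, 0 < g σ := by
      intro σ
      have hnn : ∀ i ∈ Finset.univ, 0 ≤ (∑ l, (A i l) ^ 2 - (A i (σ i)) ^ 2) / (∑ l, (A i l) ^ 2) := by
        intro i _
        have hle : (A i (σ i)) ^ 2 ≤ ∑ l, (A i l) ^ 2 :=
          Finset.single_le_sum (fun l _ => sq_nonneg (A i l)) (Finset.mem_univ (σ i))
        exact div_nonneg (by linarith) (le_of_lt (hrowpos i))
      rcases (Finset.sum_nonneg hnn).lt_or_eq with hlt | heq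
      · exact hlt
      · -- g σ = 0 leads to A ∈ PJDset
        exfalso
        apply hA
        have hterm := (Finset.sum_eq_zero_iff_of_nonneg hnn).1 heq.symm
        have hdiag : ∀ i, (A i (σ i)) ^ 2 = ∑ l, (A i l) ^ 2 := by
          intro i
          have := hterm i (Finset.mem_univ i)
          rcases div_eq_zero_iff.1 this with h1 | h2
          · linarith
          · exact absurd h2 (ne_of_gt (hrowpos i))
        have hdne : ∀ i, A i (σ i) ≠ 0 := by
          intro i hz
          have := hdiag i
          rw [hz] at this
          simpa [← this] using hrowpos i
        have hoff : ∀ i l, l ≠ σ i → A i l = 0 := by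
          intro i l hl
          have hsum : ∑ l ∈ Finset.univ.erase (σ i), (A i l) ^ 2 = 0 := by
            have := hdiag i
            rw [← Finset.add_sum_erase _ _ (Finset.mem_univ (σ i))] at this
            linarith
          have := (Finset.sum_eq_zero_iff_of_nonneg
            (fun l _ => sq_nonneg (A i l))).1 hsum l
            (Finset.mem_erase.2 ⟨hl, Finset.mem_univ l⟩)
          exact pow_eq_zero_iff (by norm_num) |>.1 this
        refine ⟨σ⁻¹, fun k => if 0 < A (σ⁻¹ k) k then 1 else -1,
          fun k => |A (σ⁻¹ k) k|, fun k => by by_cases hk : 0 < A (σ⁻¹ k) k <;> [exact Or.inl (if_pos hk); exact Or.inr (if_neg hk)],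
          fun k => abs_pos.2 (by simpa using hdne (σ⁻¹ k)), ?_⟩
        ext i k
        rw [pjd_entry]
        split
        · rename_i hik
          have hik' : i = σ⁻¹ k := hik.symm
          subst hik'
          rcases (show A (σ⁻¹ k) k ≠ 0 by simpa using hdne (σ⁻¹ k)).lt_or_gt with hneg | hpos
          · rw [if_neg (not_lt.2 hneg.le), abs_of_neg hneg]; ring
          · rw [if_pos hpos, abs_of_pos hpos]; ring
        · rename_i hik
          apply hoff
          intro hk
          exact hik (by rw [hk]; simp)
    -- ε > 0 lower bound
    have hne : (Finset.univ : Finset (Equiv.Perm (Fin p))).Nonempty :=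
      Finset.univ_nonempty
    set ε := Finset.univ.inf' hne g with hε
    have hεpos : 0 < ε := (Finset.lt_inf'_iff hne).2 fun σ _ => hg σ
    have hεle : ε ≤ sInf S := by
      apply le_csInf hSne
      rintro x ⟨C, ⟨σ, J, D, hJ, hD, rfl⟩, rfl⟩
      exact le_trans (Finset.inf'_le g (Finset.mem_univ σ)) (hbound σ J D)
    have hsinf : sInf S = 0 := by
      have := h0
      unfold Dsq at this
      rw [← hSdef] at this
      rcases mul_eq_zero.1 this with h1 | h2
      · exact absurd h1 (ne_of_gt hfac)
      · exact h2
    rw [hsinf] at hεle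
    linarith
  · -- reverse
    rintro ⟨σ, J, D, hJ, hD, rfl⟩
    set C := permMat p σ⁻¹ * Matrix.diagonal (fun k => J (σ⁻¹ k))
      * Matrix.diagonal (fun k => (D (σ⁻¹ k))⁻¹) with hC
    have hCmem : C ∈ PJDset p :=
      ⟨σ⁻¹, _, _, fun k => hJ (σ⁻¹ k), fun k => inv_pos.2 (hD (σ⁻¹ k)), rfl⟩
    have hCA : C * (permMat p σ * Matrix.diagonal J * Matrix.diagonal D) = 1 := by
      ext i m
      rw [hC, mul_entry]
      simp only [inv_inv, (fun x => σ.symm_apply_apply x : ∀ x, σ⁻¹ (σ x) = x)]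
      rw [pjd_entry, Matrix.one_apply]
      by_cases him : m = i
      · subst him
        rw [if_pos rfl, if_pos rfl]
        have hD' := (hD m).ne'
        rw [show σ⁻¹ (σ m) = m from σ.symm_apply_apply m]
        rcases hJ m with hj | hj <;> rw [hj] <;> field_simp
      · rw [if_neg (fun hh => him (σ.injective hh)), if_neg (Ne.symm him), mul_zero]
    have h0mem : (0:ℝ) ∈ S := by
      refine ⟨C, hCmem, ?_⟩
      simp [hCA, frobSq]
    have : sInf S = 0 :=
      le_antisymm (csInf_le ⟨0, hS0⟩ h0mem) (le_csInf hSne hS0)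
    unfold Dsq
    rw [← hSdef, this, mul_zero]
end

section
/- Let A be a p×p real matrix with nonzero diagonal entries, and let L be the diagonal matrix with Lᵢᵢ = aᵢᵢ/Σⱼaᵢⱼ². Then ‖LA − I_p‖² = p − Σᵢ Ãᵢᵢ where Ãᵢᵢ = aᵢᵢ²/Σⱼ aᵢⱼ². In particular, inf over diagonal L' of ‖L'A − I_p‖² is attained and afterwards minimizing over row permutations gives inf_{C∈C} ‖CA−I_p‖² = p − max_P tr(PÃ). -/
open Matrix Finset

section Helpers

variable {p : ℕ}

/-- The generalized "one nonzero entry per row/column" matrix. -/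
def genC (σ : Equiv.Perm (Fin p)) (c : Fin p → ℝ) : Matrix (Fin p) (Fin p) ℝ :=
  Matrix.of fun i j => if σ j = i then c j else 0

lemma rowSum (A : Matrix (Fin p) (Fin p) ℝ) (m t : Fin p) (c : ℝ) :
    ∑ j, (c * A m j - (if t = j then (1:ℝ) else 0)) ^ 2
      = c ^ 2 * (∑ j, (A m j) ^ 2) - 2 * c * A m t + 1 := by
  have h : ∀ j, (c * A m j - (if t = j then (1:ℝ) else 0)) ^ 2
      = c ^ 2 * (A m j)^2 - (if t = j then 2 * c * A m j else 0)
        + (if t = j then (1:ℝ) else 0) := by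
    intro j; by_cases h : t = j <;> simp [h] <;> ring
  simp_rw [h, Finset.sum_add_distrib, Finset.sum_sub_distrib, Finset.sum_ite_eq,
    Finset.mul_sum]
  simp

lemma quadLB {s a c : ℝ} (hs : 0 < s) : 1 - a^2/s ≤ c^2*s - 2*c*a + 1 := by
  have h1 : a^2/s * s = a^2 := div_mul_cancel₀ _ hs.ne'
  nlinarith [sq_nonneg (c*s - a), hs]

lemma quadEq {s a : ℝ} (hs : 0 < s) : (a/s)^2*s - 2*(a/s)*a + 1 = 1 - a^2/s := by
  field_simp; ring

lemma genC_mul (σ : Equiv.Perm (Fin p)) (c : Fin p → ℝ) (A : Matrix (Fin p) (Fin p) ℝ) :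
    genC σ c * A = Matrix.of fun i j => c (σ.symm i) * A (σ.symm i) j := by
  ext i j
  simp only [Matrix.mul_apply, genC, Matrix.of_apply, ite_mul, zero_mul]
  rw [Finset.sum_eq_single (σ.symm i)] <;> simp +contextual [Equiv.apply_eq_iff_eq_symm_apply]

lemma frob_genC (σ : Equiv.Perm (Fin p)) (c : Fin p → ℝ) (A : Matrix (Fin p) (Fin p) ℝ) :
    frobSq (genC σ c * A - 1)
      = ∑ m, ((c m) ^ 2 * (∑ j, (A m j) ^ 2) - 2 * c m * A m (σ m) + 1) := by
  rw [genC_mul, frobSq]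
  rw [← Equiv.sum_comp σ (fun i => ∑ j, ((Matrix.of fun i j => c (σ.symm i) * A (σ.symm i) j) - 1) i j ^ 2)]
  refine Finset.sum_congr rfl fun m _ => ?_
  have h1 : ∀ j, ((Matrix.of fun i j => c (σ.symm i) * A (σ.symm i) j) - 1) (σ m) j
      = c m * A m j - (if σ m = j then (1:ℝ) else 0) := by
    intro j; simp [Matrix.one_apply]
  simp_rw [h1]
  exact rowSum A m (σ m) (c m)

lemma trace_perm (σ : Equiv.Perm (Fin p)) (M : Matrix (Fin p) (Fin p) ℝ) :
    Matrix.trace (permMat p σ * M) = ∑ m, M m (σ m) := by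
  have h : permMat p σ * M = Matrix.of fun i j => M (σ.symm i) j := by
    have h0 : permMat p σ = genC σ (fun _ => 1) := by ext i j; simp [permMat, genC]
    rw [h0, genC_mul]; ext i j; simp
  rw [h, Matrix.trace]
  rw [← Equiv.sum_comp σ (fun i => Matrix.diag (Matrix.of fun i j => M (σ.symm i) j) i)]
  refine Finset.sum_congr rfl fun m _ => ?_
  simp [Matrix.diag]

lemma diag_eq_genC (L : Fin p → ℝ) : Matrix.diagonal L = genC (Equiv.refl _) L := by
  ext i j
  by_cases h : i = j <;> simp [Matrix.diagonal, genC, h, eq_comm]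

lemma permMat_mul_diag (σ : Equiv.Perm (Fin p)) (g : Fin p → ℝ) :
    permMat p σ * Matrix.diagonal g = genC σ g := by
  ext i j
  simp [Matrix.mul_apply, permMat, Matrix.diagonal, genC, ite_and]

lemma mem_PJDset_iff (C : Matrix (Fin p) (Fin p) ℝ) :
    C ∈ PJDset p ↔ ∃ (σ : Equiv.Perm (Fin p)) (c : Fin p → ℝ),
      (∀ m, c m ≠ 0) ∧ C = genC σ c := by
  constructor
  · rintro ⟨σ, J, D, hJ, hD, rfl⟩
    refine ⟨σ, fun j => J j * D j, fun m => ?_, ?_⟩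
    · rcases hJ m with h | h <;> simp [h, (hD m).ne']
    · rw [mul_assoc, Matrix.diagonal_mul_diagonal, permMat_mul_diag]
  · rintro ⟨σ, c, hc, rfl⟩
    refine ⟨σ, fun j => if 0 < c j then 1 else -1, fun j => |c j|,
      fun i => by by_cases h : 0 < c i <;> simp [h], fun i => abs_pos.mpr (hc i), ?_⟩
    rw [mul_assoc, Matrix.diagonal_mul_diagonal, permMat_mul_diag]
    have hcc : ∀ j, (if 0 < c j then (1:ℝ) else -1) * |c j| = c j := by
      intro j
      rcases lt_trichotomy (c j) 0 with h | h | h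
      · simp [not_lt.mpr h.le, abs_of_neg h]
      · exact absurd h (hc j)
      · simp [h, abs_of_pos h]
    exact congrArg (genC σ) (funext fun j => (hcc j).symm)

end Helpers

theorem stmt17 (p : ℕ) (hp : 1 ≤ p) (A : Matrix (Fin p) (Fin p) ℝ)
    (hrow : ∀ i, 0 < ∑ j, (A i j) ^ 2) (hdiag : ∀ i, A i i ≠ 0) :
    frobSq (Matrix.diagonal (fun i => A i i / ∑ j, (A i j) ^ 2) * A - 1)
      = (p : ℝ) - ∑ i, Atilde A i i ∧
    (∀ L' : Fin p → ℝ,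
      frobSq (Matrix.diagonal (fun i => A i i / ∑ j, (A i j) ^ 2) * A - 1)
        ≤ frobSq (Matrix.diagonal L' * A - 1)) ∧
    sInf ((fun C => frobSq (C * A - 1)) '' PJDset p)
      = (p : ℝ) - Finset.univ.sup' Finset.univ_nonempty
          (fun σ : Equiv.Perm (Fin p) => Matrix.trace (permMat p σ * Atilde A)) := by
  set s : Fin p → ℝ := fun i => ∑ j, (A i j) ^ 2 with hs
  have frob_diag : ∀ L : Fin p → ℝ, frobSq (Matrix.diagonal L * A - 1)
      = ∑ i, ((L i) ^ 2 * s i - 2 * L i * A i i + 1) := by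
    intro L
    rw [diag_eq_genC, frob_genC]
    simp
    rfl
  have hAt : ∀ i j, Atilde A i j = (A i j) ^ 2 / s i := fun i j => rfl
  have part1 : frobSq (Matrix.diagonal (fun i => A i i / s i) * A - 1)
      = (p : ℝ) - ∑ i, Atilde A i i := by
    rw [frob_diag]
    have h1 : ∀ i ∈ Finset.univ, (A i i / s i) ^ 2 * s i - 2 * (A i i / s i) * A i i + 1
        = 1 - Atilde A i i := by
      intro i _
      rw [hAt]
      exact quadEq (hrow i)
    rw [Finset.sum_congr rfl h1, Finset.sum_sub_distrib]
    simp
  refine ⟨part1, ?_, ?_⟩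
  · intro L'
    rw [part1, frob_diag]
    have : (p : ℝ) - ∑ i, Atilde A i i = ∑ i, (1 - Atilde A i i) := by
      rw [Finset.sum_sub_distrib]; simp
    rw [this]
    refine Finset.sum_le_sum fun i _ => ?_
    rw [hAt]
    exact quadLB (hrow i)
  · -- third part
    have hne : Nonempty (Fin p) := Fin.pos_iff_nonempty.mp hp
    set T : ℝ := Finset.univ.sup' Finset.univ_nonempty
        (fun σ : Equiv.Perm (Fin p) => Matrix.trace (permMat p σ * Atilde A)) with hT
    have htr : ∀ σ : Equiv.Perm (Fin p),
        Matrix.trace (permMat p σ * Atilde A) = ∑ m, (A m (σ m)) ^ 2 / s m := by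
      intro σ
      rw [trace_perm]
      exact Finset.sum_congr rfl fun m _ => hAt m (σ m)
    -- lower bound for every element of the image
    have hLB : ∀ x ∈ (fun C => frobSq (C * A - 1)) '' PJDset p, (p : ℝ) - T ≤ x := by
      rintro x ⟨C, hC, rfl⟩
      obtain ⟨σ, c, hc, rfl⟩ := (mem_PJDset_iff C).mp hC
      show (p : ℝ) - T ≤ frobSq (genC σ c * A - 1)
      rw [frob_genC]
      have h1 : ∑ m, (1 - (A m (σ m)) ^ 2 / s m)
          ≤ ∑ m, ((c m) ^ 2 * s m - 2 * c m * A m (σ m) + 1) :=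
        Finset.sum_le_sum fun m _ => quadLB (hrow m)
      have h2 : ∑ m, (1 - (A m (σ m)) ^ 2 / s m)
          = (p : ℝ) - Matrix.trace (permMat p σ * Atilde A) := by
        rw [htr, Finset.sum_sub_distrib]; simp
      have h3 : Matrix.trace (permMat p σ * Atilde A) ≤ T := by
        rw [hT]
        exact Finset.le_sup' (fun σ : Equiv.Perm (Fin p) =>
          Matrix.trace (permMat p σ * Atilde A)) (Finset.mem_univ σ)
      linarith
    have hbdd : BddBelow ((fun C => frobSq (C * A - 1)) '' PJDset p) := ⟨(p : ℝ) - T, hLB⟩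
    have hnonempty : ((fun C => frobSq (C * A - 1)) '' PJDset p).Nonempty := by
      refine ⟨frobSq (genC (Equiv.refl _) (fun _ => (1:ℝ)) * A - 1), ⟨_, ?_, rfl⟩⟩
      exact (mem_PJDset_iff _).mpr ⟨Equiv.refl _, fun _ => 1, fun m => one_ne_zero, rfl⟩
    refine le_antisymm ?_ (le_csInf hnonempty hLB)
    -- upper bound: sInf ≤ p - T + ε for every ε > 0
    refine le_of_forall_pos_le_add fun ε hε => ?_
    obtain ⟨σ₀, _, hσ₀⟩ := Finset.exists_mem_eq_sup' Finset.univ_nonempty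
        (fun σ : Equiv.Perm (Fin p) => Matrix.trace (permMat p σ * Atilde A))
    have hS : 0 < ∑ m, s m := Finset.sum_pos (fun m _ => hrow m) Finset.univ_nonempty
    set S : ℝ := ∑ m, s m with hSdef
    set δ : ℝ := Real.sqrt (ε / S) with hδ
    have hδpos : 0 < δ := Real.sqrt_pos.mpr (div_pos hε hS)
    have hδsq : δ ^ 2 = ε / S := Real.sq_sqrt (div_pos hε hS).le
    set c : Fin p → ℝ := fun m => if A m (σ₀ m) = 0 then δ else A m (σ₀ m) / s m with hcdef
    have hc : ∀ m, c m ≠ 0 := by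
      intro m
      rw [hcdef]
      by_cases h : A m (σ₀ m) = 0
      · simp [h, hδpos.ne']
      · simp [h, (hrow m).ne']
        exact (hrow m).ne'
    have hmem : genC σ₀ c ∈ PJDset p := (mem_PJDset_iff _).mpr ⟨σ₀, c, hc, rfl⟩
    have hval : frobSq (genC σ₀ c * A - 1) ≤ ((p : ℝ) - T) + ε := by
      rw [frob_genC]
      have hterm : ∀ m ∈ Finset.univ, (c m) ^ 2 * s m - 2 * c m * A m (σ₀ m) + 1
          ≤ (1 - (A m (σ₀ m)) ^ 2 / s m) + δ ^ 2 * s m := by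
        intro m _
        by_cases h : A m (σ₀ m) = 0
        · simp only [hcdef, h, if_pos]
          simp only [h, mul_zero, sub_zero, ne_eq, OfNat.ofNat_ne_zero, not_false_eq_true,
            zero_pow, zero_div]
          linarith
        · have hcm : c m = A m (σ₀ m) / s m := by simp [hcdef, h]
          rw [hcm, quadEq (hrow m)]
          nlinarith [sq_nonneg δ, (hrow m).le, mul_nonneg (sq_nonneg δ) (hrow m).le]
      have h1 := Finset.sum_le_sum hterm
      have h2 : ∑ m, ((1 - (A m (σ₀ m)) ^ 2 / s m) + δ ^ 2 * s m)
          = ((p : ℝ) - T) + ε := by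
        rw [Finset.sum_add_distrib, Finset.sum_sub_distrib, ← Finset.mul_sum, ← hSdef,
          hδsq, div_mul_cancel₀ _ hS.ne']
        have hTval : T = ∑ m, (A m (σ₀ m)) ^ 2 / s m := by rw [hT, hσ₀, htr σ₀]
        rw [hTval]
        simp
      linarith
    calc sInf ((fun C => frobSq (C * A - 1)) '' PJDset p)
        ≤ frobSq (genC σ₀ c * A - 1) := csInf_le hbdd ⟨_, hmem, rfl⟩
      _ ≤ ((p : ℝ) - T) + ε := hval
end

section
/- For any p×p real matrix G, the 'fully invariant' index inf over C₁, C₂ ∈ C of ‖C₁ G C₂⁻¹ − I_p‖ is degenerate in the bivariate case: for p = 2, any lower-triangular matrix G with nonzero diagonal entries g₁₁ ≠ 0, g₂₂ ≠ 0 satisfies inf_{C₁,C₂∈C} ‖C₁GC₂⁻¹ − I₂‖ = 0. -/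
open Matrix Finset

lemma diag_mem_PJD (v : Fin 2 → ℝ) (hv : ∀ i, v i ≠ 0) :
    Matrix.diagonal v ∈ PJDset 2 := by
  refine ⟨1, fun i => if 0 ≤ v i then 1 else -1, fun i => |v i|,
    fun i => ?_, fun i => abs_pos.mpr (hv i), ?_⟩
  · by_cases h : 0 ≤ v i <;> simp [h]
  · have hperm : permMat 2 1 = 1 := by
      ext i j
      simp [permMat, Matrix.one_apply, eq_comm]
    have hfun : (fun i => (if 0 ≤ v i then (1:ℝ) else -1) * |v i|) = v := by
      funext i
      rcases le_or_gt 0 (v i) with h | h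
      · simp [h, abs_of_nonneg h]
      · simp [not_le.mpr h, abs_of_neg h]
    rw [hperm, one_mul, Matrix.diagonal_mul_diagonal, hfun]

lemma diag_fin_two (a b : ℝ) : Matrix.diagonal ![a, b] = !![a, 0; 0, b] := by
  ext i j
  fin_cases i <;> fin_cases j <;> simp [Matrix.diagonal]

lemma key (g11 g21 g22 c : ℝ) (h11 : g11 ≠ 0) (h22 : g22 ≠ 0) (hc : c ≠ 0) :
    |g21 / c| ∈ {x : ℝ | ∃ C₁ ∈ PJDset 2, ∃ C₂ ∈ PJDset 2,
      x = Real.sqrt (frobSq (C₁ * !![g11, 0; g21, g22] * C₂⁻¹ - 1))} := by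
  refine ⟨Matrix.diagonal ![c / g11, 1], diag_mem_PJD _ (fun i => ?_),
    Matrix.diagonal ![c, g22], diag_mem_PJD _ (fun i => ?_), ?_⟩
  · fin_cases i <;> simp [div_ne_zero hc h11]
  · fin_cases i <;> simp [hc, h22]
  · have hinv : (Matrix.diagonal ![c, g22])⁻¹ = Matrix.diagonal ![c⁻¹, g22⁻¹] := by
      apply Matrix.inv_eq_left_inv
      rw [Matrix.diagonal_mul_diagonal]
      have hfun : (fun i => ![c⁻¹, g22⁻¹] i * ![c, g22] i) = fun _ => (1:ℝ) := by
        funext i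
        fin_cases i <;> simp [inv_mul_cancel₀ hc, inv_mul_cancel₀ h22]
      rw [hfun, Matrix.diagonal_one]
    rw [hinv, diag_fin_two, diag_fin_two]
    have : !![c / g11, 0; 0, 1] * !![g11, 0; g21, g22] * !![c⁻¹, 0; 0, g22⁻¹] - 1 =
        !![0, 0; g21 / c, 0] := by
      rw [Matrix.one_fin_two]
      ext i j
      fin_cases i <;> fin_cases j <;>
        simp [Matrix.mul_apply, Fin.sum_univ_two] <;> field_simp <;> norm_num
    rw [this]
    have hfr : frobSq !![(0:ℝ), 0; g21 / c, 0] = (g21 / c) ^ 2 := by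
      simp [frobSq, Fin.sum_univ_two]
    rw [hfr, Real.sqrt_sq_eq_abs]

theorem stmt18 (g11 g21 g22 : ℝ) (h11 : g11 ≠ 0) (h22 : g22 ≠ 0) :
    sInf {x : ℝ | ∃ C₁ ∈ PJDset 2, ∃ C₂ ∈ PJDset 2,
      x = Real.sqrt (frobSq (C₁ * !![g11, 0; g21, g22] * C₂⁻¹ - 1))} = 0 := by
  set S := {x : ℝ | ∃ C₁ ∈ PJDset 2, ∃ C₂ ∈ PJDset 2,
      x = Real.sqrt (frobSq (C₁ * !![g11, 0; g21, g22] * C₂⁻¹ - 1))} with hS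
  have hbdd : BddBelow S := by
    refine ⟨0, fun x hx => ?_⟩
    obtain ⟨C₁, _, C₂, _, rfl⟩ := hx
    exact Real.sqrt_nonneg _
  have hne : S.Nonempty := ⟨_, key g11 g21 g22 1 h11 h22 one_ne_zero⟩
  refine le_antisymm (le_of_forall_pos_le_add fun ε hε => ?_) (le_csInf hne ?_)
  · rw [zero_add]
    set c : ℝ := (|g21| + 1) / ε with hcdef
    have hcpos : 0 < c := div_pos (by positivity) hε
    have hmem := key g11 g21 g22 c h11 h22 (ne_of_gt hcpos)
    have hle : |g21 / c| ≤ ε := by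
      rw [abs_div, abs_of_pos hcpos, div_le_iff₀ hcpos, hcdef]
      have heq : ε * ((|g21| + 1) / ε) = |g21| + 1 := by field_simp
      rw [heq]
      linarith [abs_nonneg g21]
    exact le_trans (csInf_le hbdd hmem) hle
  · rintro x ⟨C₁, _, C₂, _, rfl⟩
    exact Real.sqrt_nonneg _
end
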